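/- Let Q be a preorder and C an unbounded cofinal subset of Q. Then there exists a cofinal subset A of Q with A ⊆ C such that A is |C|-like, i.e., every subset of A that is bounded in Q has cardinality less than |C|. -/

import Mathlib

open Cardinal

/-- A subset `S` of a quasiorder `⟨α, r⟩` is bounded if it has an upper bound. -/
def TBounded {α : Type*} (r : α → α → Prop) (S : Set α) : Prop :=
  ∃ b, ∀ x ∈ S, r x b

/-- A subset `C` of `⟨α, r⟩` is cofinal if every element lies below a member of `C`. -/
def TCofinal {α : Type*} (r : α → α → Prop) (C : Set α) : Prop :=
  ∀ x, ∃ c ∈ C, r x c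

/-- A Tukey map: the image of every unbounded set is unbounded. -/
def IsTukeyMap {α β : Type*} (ra : α → α → Prop) (rb : β → β → Prop) (f : α → β) : Prop :=
  ∀ S : Set α, ¬ TBounded ra S → ¬ TBounded rb (f '' S)

/-- Tukey reducibility `P ≤_T Q`: there is a Tukey map from `P` to `Q`. -/
def TukeyLE {α β : Type*} (ra : α → α → Prop) (rb : β → β → Prop) : Prop :=
  ∃ f : α → β, IsTukeyMap ra rb f

/-- Tukey equivalence `P ≡_T Q`. -/
def TukeyEquiv {α β : Type*} (ra : α → α → Prop) (rb : β → β → Prop) : Prop :=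
  TukeyLE ra rb ∧ TukeyLE rb ra

/-- Strict Tukey reducibility `P <_T Q`. -/
def TukeyLT {α β : Type*} (ra : α → α → Prop) (rb : β → β → Prop) : Prop :=
  TukeyLE ra rb ∧ ¬ TukeyLE rb ra

/-- A directed set: a preorder in which every finite subset (in particular `∅` and pairs)
has an upper bound; equivalently, a nonempty directed preorder. -/
structure IsDirectedSet {α : Type*} (r : α → α → Prop) : Prop where
  nonempty : Nonempty α
  refl : ∀ x, r x x
  trans : ∀ {x y z}, r x y → r y z → r x z
  directed : ∀ x y, ∃ z, r x z ∧ r y z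

/-- Every unbounded cofinal subset `C` of a preorder contains a cofinal subset `A` that
is `|C|`-like: every subset of `A` bounded in `Q` has cardinality less than `|C|`. -/
theorem stmt16 {Q : Type*} (r : Q → Q → Prop)
    (hrefl : ∀ x, r x x) (htrans : ∀ {x y z}, r x y → r y z → r x z)
    (C : Set Q) (hcof : TCofinal r C) (hunb : ¬ TBounded r C) :
    ∃ A ⊆ C, TCofinal r A ∧ ∀ S : Set Q, S ⊆ A → TBounded r S → #S < #C := by
  classical
  by_cases hfin : C.Finite
  · refine ⟨C, subset_rfl, hcof, fun S hS hSb => ?_⟩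
    have hss : S ≠ C := by rintro rfl; exact hunb hSb
    obtain ⟨x, hxC, hxS⟩ := Set.exists_of_ssubset (hS.ssubset_of_ne hss)
    have hSfin : S.Finite := hfin.subset hS
    obtain ⟨n, hn⟩ := Cardinal.lt_aleph0.1 hSfin.lt_aleph0
    have h1 : #S < #(insert x S : Set Q) := by
      rw [Cardinal.mk_insert hxS, hn]
      exact_mod_cast Nat.lt_succ_self n
    exact h1.trans_le (Cardinal.mk_le_mk_of_subset (Set.insert_subset hxC hS))
  · have hinf : Infinite C := Set.infinite_coe_iff.2 hfin
    have hκ : ℵ₀ ≤ #C := Cardinal.aleph0_le_mk C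
    obtain ⟨f⟩ : Nonempty ((#C).ord.ToType ≃ C) :=
      Cardinal.eq.1 (Cardinal.mk_ord_toType (#C))
    set ι := (#C).ord.ToType with hι
    have wf : WellFounded ((· < ·) : ι → ι → Prop) := wellFounded_lt
    let g : ι → Q := fun i => (f i : Q)
    have hex : ∀ q : Q, {i : ι | r q (g i)}.Nonempty := by
      intro q
      obtain ⟨c, hc, hrc⟩ := hcof q
      refine ⟨f.symm ⟨c, hc⟩, ?_⟩
      show r q (g (f.symm ⟨c, hc⟩))
      simpa [g] using hrc
    let m : Q → ι := fun q => wf.min {i : ι | r q (g i)} (hex q)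
    have hm : ∀ q, r q (g (m q)) := fun q => wf.min_mem _ (hex q)
    have hmle : ∀ q (j : ι), r q (g j) → m q ≤ j := fun q j hj => wf.min_le hj
    refine ⟨Set.range (fun q => g (m q)), ?_, ?_, ?_⟩
    · rintro x ⟨q, rfl⟩; exact (f (m q)).2
    · intro q; exact ⟨g (m q), ⟨q, rfl⟩, hm q⟩
    · rintro S hSA ⟨b, hb⟩
      have hjb : r b (g (m b)) := hm b
      have hsub : S ⊆ g '' Set.Iic (m b) := by
        intro x hx
        obtain ⟨q, rfl⟩ := hSA hx
        exact ⟨m q, hmle q (m b) (htrans (htrans (hm q) (hb _ hx)) hjb), rfl⟩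
      have h1 : #S ≤ #(Set.Iic (m b)) :=
        (Cardinal.mk_le_mk_of_subset hsub).trans Cardinal.mk_image_le
      have h2 : #(Set.Iic (m b)) < #C := by
        have hIio : #(Set.Iio (m b)) < #C := Cardinal.mk_Iio_ord_toType (m b)
        have : (Set.Iic (m b)) = insert (m b) (Set.Iio (m b)) := Set.Iio_insert.symm
        rw [this]
        calc #(insert (m b) (Set.Iio (m b)) : Set ι) ≤ #(Set.Iio (m b)) + 1 :=
              Cardinal.mk_insert_le
          _ < #C := Cardinal.add_lt_of_lt hκ hIio (Cardinal.one_lt_aleph0.trans_le hκ)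
      exact h1.trans_lt h2
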